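/- For nonnegative reals y_I (I ⊆ [n]), the Minkowski sum Σ_I y_I Δ_I of dilated faces of the standard simplex equals the generalized permutohedron P_n({z_I}) where z_I = Σ_{J ⊆ I} y_J. -/

import Mathlib

open Finset
open scoped Pointwise Classical

/-- The generalized permutohedron `P_n({z_I})`. -/
def genPerm (n : ℕ) (z : Finset (Fin n) → ℝ) : Set (Fin n → ℝ) :=
  {t | (∑ i, t i) = z Finset.univ ∧ ∀ I : Finset (Fin n), z I ≤ ∑ i ∈ I, t i}

/-- `Δ_J = conv{e_i : i ∈ J}`, the face of the standard simplex indexed by `J`. -/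
def simplexFace {α : Type*} [DecidableEq α] (J : Finset α) : Set (α → ℝ) :=
  convexHull ℝ {x | ∃ i ∈ J, x = Pi.single i (1 : ℝ)}

/-- The maximum of `w` on `J` (or `0` if `J = ∅`). -/
noncomputable def maxW {n : ℕ} (w : Fin n → ℝ) (J : Finset (Fin n)) : ℝ :=
  if h : J.Nonempty then J.sup' h w else 0

lemma simplexFace_subset {n : ℕ} (J : Finset (Fin n)) :
    simplexFace J ⊆
      {x : Fin n → ℝ | (∀ i, 0 ≤ x i) ∧ (∑ i, x i) = 1 ∧ ∀ i ∉ J, x i = 0} := by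
  apply convexHull_min
  · rintro x ⟨i, hi, rfl⟩
    refine ⟨fun j => ?_, ?_, fun j hj => ?_⟩
    · rcases eq_or_ne i j with rfl | h
      · simp
      · simp [Pi.single_apply, h]
    · simp
    · have : i ≠ j := fun h => hj (h ▸ hi)
      simp [Pi.single_apply, this]
  · rintro x hx y hy a b ha hb hab
    refine ⟨fun i => ?_, ?_, fun i hi => ?_⟩
    · have := add_nonneg (mul_nonneg ha (hx.1 i)) (mul_nonneg hb (hy.1 i))
      simpa using this
    · have : ∑ i, (a * x i + b * y i) = 1 := by
        rw [Finset.sum_add_distrib, ← Finset.mul_sum, ← Finset.mul_sum, hx.2.1, hy.2.1]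
        simpa using hab
      simpa using this
    · have hx0 := hx.2.2 i hi
      have hy0 := hy.2.2 i hi
      simp [hx0, hy0]

lemma single_mem_simplexFace {n : ℕ} {J : Finset (Fin n)} {i : Fin n} (hi : i ∈ J) :
    Pi.single i (1 : ℝ) ∈ simplexFace J :=
  subset_convexHull ℝ _ ⟨i, hi, rfl⟩

/-- Key inequality: any point of the generalized permutohedron has `w`-value at most
`∑_J y_J max_{i ∈ J} w_i`. Proved by induction on the number of distinct values of `w`. -/
lemma key_ineq {n : ℕ} (y : Finset (Fin n) → ℝ) (hy : ∀ I, 0 ≤ y I) (hy0 : y ∅ = 0)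
    (t : Fin n → ℝ)
    (h1 : (∑ i, t i) = ∑ J ∈ (Finset.univ : Finset (Fin n)).powerset, y J)
    (h2 : ∀ I : Finset (Fin n), ∑ J ∈ I.powerset, y J ≤ ∑ i ∈ I, t i)
    (w : Fin n → ℝ) :
    ∑ i, t i * w i ≤ ∑ J ∈ (Finset.univ : Finset (Fin n)).powerset, y J * maxW w J := by
  -- the constant case
  have const_case : ∀ w : Fin n → ℝ, (∀ i j : Fin n, w i = w j) →
      ∑ i, t i * w i ≤ ∑ J ∈ (Finset.univ : Finset (Fin n)).powerset, y J * maxW w J := by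
    intro w hc
    rcases isEmpty_or_nonempty (Fin n) with he | hne
    · have huniv : (Finset.univ : Finset (Fin n)) = ∅ := Finset.univ_eq_empty
      rw [huniv]
      have : ∀ J ∈ (∅ : Finset (Fin n)).powerset, y J * maxW w J = 0 := by
        intro J hJ
        rw [Finset.mem_powerset] at hJ
        have : J = ∅ := Finset.subset_empty.mp hJ
        subst this
        simp [maxW, hy0]
      rw [Finset.sum_eq_zero this]
      simp
    · obtain ⟨i0⟩ := hne
      set c := w i0 with hc0
      have hw : ∀ i, w i = c := fun i => hc i i0
      have hL : ∑ i, t i * w i = (∑ J ∈ (Finset.univ : Finset (Fin n)).powerset, y J) * c := by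
        rw [← h1, Finset.sum_mul]
        exact Finset.sum_congr rfl fun i _ => by rw [hw i]
      have hR : ∀ J ∈ (Finset.univ : Finset (Fin n)).powerset, y J * maxW w J = y J * c := by
        intro J _
        by_cases hJ : J.Nonempty
        · have : maxW w J = c := by
            rw [maxW, dif_pos hJ]
            obtain ⟨j, hjJ, hj⟩ := Finset.exists_mem_eq_sup' hJ w
            rw [hj, hw j]
          rw [this]
        · have : J = ∅ := Finset.not_nonempty_iff_eq_empty.mp hJ
          subst this
          simp [maxW, hy0]
      rw [hL, Finset.sum_congr rfl hR, ← Finset.sum_mul]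
  -- strong induction on the number of distinct values of w
  suffices h : ∀ N : ℕ, ∀ w : Fin n → ℝ, ((Finset.univ : Finset (Fin n)).image w).card ≤ N →
      ∑ i, t i * w i ≤ ∑ J ∈ (Finset.univ : Finset (Fin n)).powerset, y J * maxW w J by
    exact h _ w le_rfl
  intro N
  induction N with
  | zero =>
    intro w hw
    apply const_case
    intro i j
    exfalso
    have : w i ∈ (Finset.univ : Finset (Fin n)).image w := Finset.mem_image_of_mem w (mem_univ i)
    have : ((Finset.univ : Finset (Fin n)).image w).Nonempty := ⟨w i, this⟩
    have hpos := Finset.card_pos.mpr this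
    omega
  | succ N ih =>
    intro w hw
    by_cases hc : ∀ i j : Fin n, w i = w j
    · exact const_case w hc
    push_neg at hc
    obtain ⟨i1, j1, hne⟩ := hc
    have hfn : Nonempty (Fin n) := ⟨i1⟩
    have huniv : (Finset.univ : Finset (Fin n)).Nonempty := Finset.univ_nonempty
    set M := (Finset.univ : Finset (Fin n)).sup' huniv w with hM
    have hle : ∀ i, w i ≤ M := fun i => Finset.le_sup' w (mem_univ i)
    set A := Finset.univ.filter (fun i => w i = M) with hAdef
    set B := Finset.univ.filter (fun i => ¬ (w i = M)) with hBdef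
    have hB : B.Nonempty := by
      by_contra hB
      rw [Finset.not_nonempty_iff_eq_empty] at hB
      have hall : ∀ i : Fin n, w i = M := by
        intro i
        by_contra hi
        have : i ∈ B := by simp [hBdef, hi]
        simp [hB] at this
      exact hne ((hall i1).trans (hall j1).symm)
    set M2 := B.sup' hB w with hM2
    have hM2leM : M2 ≤ M := Finset.sup'_le hB w fun i _ => hle i
    have hM2lt : M2 < M := by
      rw [hM2, Finset.sup'_lt_iff hB]
      intro i hi
      rw [hBdef, Finset.mem_filter] at hi
      exact lt_of_le_of_ne (hle i) hi.2
    set w' := fun i => min (w i) M2 with hw'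
    have hw'B : ∀ i ∈ B, w' i = w i := by
      intro i hi
      exact min_eq_left (Finset.le_sup' w hi)
    have hw'A : ∀ i, w i = M → w' i = M2 := by
      intro i hi
      simp only [hw']
      rw [hi]
      exact min_eq_right hM2leM
    -- cardinality decreases
    have hcard : ((Finset.univ : Finset (Fin n)).image w').card ≤ N := by
      have hsub : (Finset.univ : Finset (Fin n)).image w' ⊆ B.image w := by
        intro v hv
        rw [Finset.mem_image] at hv
        obtain ⟨i, _, rfl⟩ := hv
        by_cases hi : w i = M
        · rw [hw'A i hi]
          obtain ⟨b, hbB, hb⟩ := Finset.exists_mem_eq_sup' hB w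
          exact Finset.mem_image.mpr ⟨b, hbB, hb.symm⟩
        · have hiB : i ∈ B := by simp [hBdef, hi]
          rw [hw'B i hiB]
          exact Finset.mem_image_of_mem w hiB
      have hssub : B.image w ⊂ (Finset.univ : Finset (Fin n)).image w := by
        constructor
        · exact Finset.image_subset_image (Finset.subset_univ B)
        · intro hcon
          obtain ⟨m, hmuniv, hm⟩ := Finset.exists_mem_eq_sup' huniv w
          have hMmem : M ∈ (Finset.univ : Finset (Fin n)).image w :=
            Finset.mem_image.mpr ⟨m, hmuniv, hm.symm⟩
          have := hcon hMmem
          rw [Finset.mem_image] at this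
          obtain ⟨b, hbB, hb⟩ := this
          rw [hBdef, Finset.mem_filter] at hbB
          exact hbB.2 hb
      have h1' := Finset.card_le_card hsub
      have h2' := Finset.card_lt_card hssub
      omega
    have IH := ih w' hcard
    -- decompose the left-hand side
    set D := (Finset.univ : Finset (Fin n)).powerset \ B.powerset with hDdef
    have hDmem : ∀ J : Finset (Fin n), J ∈ D ↔ ¬ J ⊆ B := by
      intro J
      simp [hDdef, Finset.mem_sdiff, Finset.mem_powerset, Finset.subset_univ]
    have hABsplit : ∑ i ∈ A, t i + ∑ i ∈ B, t i = ∑ i, t i :=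
      Finset.sum_filter_add_sum_filter_not Finset.univ (fun i => w i = M) t
    have hAbound : ∑ i ∈ A, t i ≤ ∑ J ∈ D, y J := by
      have hDsum : ∑ J ∈ D, y J
          = ∑ J ∈ (Finset.univ : Finset (Fin n)).powerset, y J - ∑ J ∈ B.powerset, y J :=
        Finset.sum_sdiff_eq_sub (Finset.powerset_mono.mpr (Finset.subset_univ B))
      have h2B := h2 B
      have : ∑ i ∈ A, t i = ∑ i, t i - ∑ i ∈ B, t i := by linarith
      rw [this, h1, hDsum]
      linarith
    have hLsplit : ∑ i, t i * w i = ∑ i, t i * w' i + (∑ i ∈ A, t i) * (M - M2) := by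
      have e0 : ∀ i : Fin n, t i * w i = t i * w' i + t i * (w i - w' i) := by
        intro i; ring
      rw [Finset.sum_congr rfl fun i _ => e0 i, Finset.sum_add_distrib]
      congr 1
      rw [← Finset.sum_filter_add_sum_filter_not Finset.univ (fun i => w i = M)
        (fun i => t i * (w i - w' i))]
      have eB : ∑ i ∈ Finset.univ.filter (fun i => ¬ (w i = M)), t i * (w i - w' i) = 0 := by
        apply Finset.sum_eq_zero
        intro i hi
        rw [hw'B i hi]
        ring
      have eA : ∑ i ∈ Finset.univ.filter (fun i => w i = M), t i * (w i - w' i)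
          = ∑ i ∈ A, t i * (M - M2) := by
        apply Finset.sum_congr rfl
        intro i hi
        rw [Finset.mem_filter] at hi
        rw [hw'A i hi.2, hi.2]
      rw [eA, eB, add_zero, ← Finset.sum_mul]
    -- decompose the right-hand side
    have hRsplit : ∑ J ∈ (Finset.univ : Finset (Fin n)).powerset, y J * maxW w J
        = ∑ J ∈ (Finset.univ : Finset (Fin n)).powerset, y J * maxW w' J
          + (∑ J ∈ D, y J) * (M - M2) := by
      have hterm : ∀ J ∈ (Finset.univ : Finset (Fin n)).powerset,
          y J * maxW w J = y J * maxW w' J + (if J ∈ D then y J * (M - M2) else 0) := by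
        intro J _
        by_cases hJ : J.Nonempty
        · by_cases hJB : J ⊆ B
          · have hJD : J ∉ D := by rw [hDmem]; exact fun h => h hJB
            rw [if_neg hJD, add_zero]
            congr 1
            rw [maxW, maxW, dif_pos hJ, dif_pos hJ]
            exact Finset.sup'_congr hJ rfl (fun i hi => (hw'B i (hJB hi)).symm)
          · have hJD : J ∈ D := (hDmem J).mpr hJB
            rw [if_pos hJD]
            obtain ⟨i0, hi0J, hi0⟩ : ∃ i ∈ J, w i = M := by
              by_contra hcon
              push_neg at hcon
              exact hJB fun i hi => by simp [hBdef, hcon i hi]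
            have hmaxw : maxW w J = M := by
              rw [maxW, dif_pos hJ]
              apply le_antisymm (Finset.sup'_le hJ w fun i _ => hle i)
              calc M = w i0 := hi0.symm
                _ ≤ J.sup' hJ w := Finset.le_sup' w hi0J
            have hmaxw' : maxW w' J = M2 := by
              rw [maxW, dif_pos hJ]
              apply le_antisymm (Finset.sup'_le hJ w' fun i _ => min_le_right _ _)
              calc M2 = w' i0 := (hw'A i0 hi0).symm
                _ ≤ J.sup' hJ w' := Finset.le_sup' w' hi0J
            rw [hmaxw, hmaxw']
            ring
        · have : J = ∅ := Finset.not_nonempty_iff_eq_empty.mp hJ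
          subst this
          simp [maxW, hy0]
      rw [Finset.sum_congr rfl hterm, Finset.sum_add_distrib]
      congr 1
      rw [Finset.sum_ite_mem]
      have : (Finset.univ : Finset (Fin n)).powerset ∩ D = D :=
        Finset.inter_eq_right.mpr (Finset.sdiff_subset)
      rw [this, ← Finset.sum_mul]
    -- combine
    have hApos : (∑ i ∈ A, t i) * (M - M2) ≤ (∑ J ∈ D, y J) * (M - M2) := by
      apply mul_le_mul_of_nonneg_right hAbound
      linarith
    rw [hLsplit, hRsplit]
    linarith

lemma convex_finsetSum {n : ℕ} {ι : Type*} (s : Finset ι) (A : ι → Set (Fin n → ℝ))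
    (h : ∀ i ∈ s, Convex ℝ (A i)) : Convex ℝ (∑ i ∈ s, A i) := by
  induction s using Finset.cons_induction with
  | empty =>
    rw [Finset.sum_empty, show (0 : Set (Fin n → ℝ)) = {0} from rfl]
    exact convex_singleton (𝕜 := ℝ) (0 : Fin n → ℝ)
  | cons i s hi ih =>
    rw [Finset.sum_cons]
    exact (h i (Finset.mem_cons_self i s)).add
      (ih fun j hj => h j (Finset.mem_cons_of_mem hj))

lemma isCompact_finsetSum {n : ℕ} {ι : Type*} (s : Finset ι) (A : ι → Set (Fin n → ℝ))
    (h : ∀ i ∈ s, IsCompact (A i)) : IsCompact (∑ i ∈ s, A i) := by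
  induction s using Finset.cons_induction with
  | empty =>
    rw [Finset.sum_empty, show (0 : Set (Fin n → ℝ)) = {0} from rfl]
    exact isCompact_singleton
  | cons i s hi ih =>
    rw [Finset.sum_cons]
    exact (h i (Finset.mem_cons_self i s)).add
      (ih fun j hj => h j (Finset.mem_cons_of_mem hj))

lemma isCompact_simplexFace {n : ℕ} (J : Finset (Fin n)) : IsCompact (simplexFace J) := by
  have hfin : {x : Fin n → ℝ | ∃ i ∈ J, x = Pi.single i (1 : ℝ)}.Finite := by
    have : {x : Fin n → ℝ | ∃ i ∈ J, x = Pi.single i (1 : ℝ)}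
        = (fun i => Pi.single i (1 : ℝ)) '' (J : Set (Fin n)) := by
      ext x
      simp [eq_comm]
    rw [this]
    exact (J.finite_toSet).image _
  exact hfin.isCompact_convexHull (𝕜 := ℝ)

lemma linfunc_eq {n : ℕ} (f : (Fin n → ℝ) →L[ℝ] ℝ) (x : Fin n → ℝ) :
    f x = ∑ i, x i * f (Pi.single i 1) := by
  have hx : x = ∑ i, x i • (Pi.single i (1 : ℝ) : Fin n → ℝ) := by
    funext j
    rw [Finset.sum_apply]
    simp [Pi.single_apply, mul_comm]
  conv_lhs => rw [hx]
  rw [map_sum]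
  exact Finset.sum_congr rfl fun i _ => by rw [map_smul]; rfl

/-- Proposition 2.2: for nonnegative `y_I`, the Minkowski sum `∑ y_I Δ_I` is the
generalized permutohedron `P_n({z_I})` with `z_I = ∑_{J ⊆ I} y_J`. -/
theorem sum_simplices_eq_genPerm (n : ℕ) (y : Finset (Fin n) → ℝ)
    (hy : ∀ I, 0 ≤ y I) (hy0 : y ∅ = 0) :
    ∑ I ∈ (Finset.univ : Finset (Fin n)).powerset.filter (fun I => I.Nonempty),
        y I • simplexFace I
      = genPerm n (fun I => ∑ J ∈ I.powerset, y J) := by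
  set S := (Finset.univ : Finset (Fin n)).powerset.filter (fun I => I.Nonempty) with hSdef
  have hzfull : ∀ I : Finset (Fin n),
      ∑ J ∈ I.powerset.filter (fun J => J.Nonempty), y J = ∑ J ∈ I.powerset, y J := by
    intro I
    apply Finset.sum_filter_of_ne
    intro J _ hJ
    rcases Finset.eq_empty_or_nonempty J with rfl | h
    · exact absurd hy0 hJ
    · exact h
  apply Set.Subset.antisymm
  · -- easy direction
    intro x hx
    rw [Set.mem_finset_sum] at hx
    obtain ⟨g, hg, hgsum⟩ := hx
    -- for each I in S get the profile
    have hprof : ∀ I ∈ S, (∀ i, 0 ≤ g I i) ∧ (∑ i, g I i) = y I ∧ ∀ i ∉ I, g I i = 0 := by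
      intro I hI
      obtain ⟨xI, hxI, hgI⟩ := Set.mem_smul_set.mp (hg hI)
      have hxI' := simplexFace_subset I hxI
      refine ⟨fun i => ?_, ?_, fun i hi => ?_⟩
      · rw [← hgI]
        exact mul_nonneg (hy I) (hxI'.1 i)
      · rw [← hgI]
        have : ∑ i, (y I • xI) i = y I * ∑ i, xI i := by
          simp [Finset.mul_sum]
        rw [this, hxI'.2.1, mul_one]
      · rw [← hgI]
        simp [hxI'.2.2 i hi]
    have hxapp : ∀ i, x i = ∑ I ∈ S, g I i := by
      intro i
      rw [← hgsum, Finset.sum_apply]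
    constructor
    · -- total sum
      have : ∑ i, x i = ∑ I ∈ S, ∑ i, g I i := by
        rw [Finset.sum_congr rfl fun i _ => hxapp i, Finset.sum_comm]
      rw [this, Finset.sum_congr rfl fun I hI => (hprof I hI).2.1]
      exact hzfull Finset.univ
    · -- inequalities
      intro I
      have hIs : ∑ i ∈ I, x i = ∑ J ∈ S, ∑ i ∈ I, g J i := by
        rw [Finset.sum_congr rfl fun i _ => hxapp i, Finset.sum_comm]
      rw [hIs]
      have hterm : ∀ J ∈ S, (if J ⊆ I then y J else 0) ≤ ∑ i ∈ I, g J i := by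
        intro J hJ
        by_cases hJI : J ⊆ I
        · rw [if_pos hJI]
          have hsplit : ∑ i ∈ I, g J i = ∑ i, g J i := by
            rw [← Finset.sum_filter_add_sum_filter_not Finset.univ (fun i => i ∈ I) (g J)]
            have e1 : Finset.univ.filter (fun i => i ∈ I) = I := by
              ext i; simp
            have e2 : ∑ i ∈ Finset.univ.filter (fun i => ¬ i ∈ I), g J i = 0 := by
              apply Finset.sum_eq_zero
              intro i hi
              rw [Finset.mem_filter] at hi
              exact (hprof J hJ).2.2 i (fun h => hi.2 (hJI h))
            rw [e1, e2, add_zero]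
          rw [hsplit, (hprof J hJ).2.1]
        · rw [if_neg hJI]
          exact Finset.sum_nonneg fun i _ => (hprof J hJ).1 i
      calc ∑ J ∈ I.powerset, y J
          = ∑ J ∈ I.powerset.filter (fun J => J.Nonempty), y J := (hzfull I).symm
        _ = ∑ J ∈ S.filter (fun J => J ⊆ I), y J := by
            apply Finset.sum_congr _ (fun _ _ => rfl)
            ext J
            simp only [Finset.mem_filter, Finset.mem_powerset, hSdef]
            constructor
            · rintro ⟨hJI, hJne⟩
              exact ⟨⟨Finset.subset_univ J, hJne⟩, hJI⟩
            · rintro ⟨⟨_, hJne⟩, hJI⟩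
              exact ⟨hJI, hJne⟩
        _ = ∑ J ∈ S, (if J ⊆ I then y J else 0) := Finset.sum_filter _ _
        _ ≤ ∑ J ∈ S, ∑ i ∈ I, g J i := Finset.sum_le_sum hterm
  · -- hard direction, by separation
    intro t ht
    by_contra hns
    set K := ∑ I ∈ S, y I • simplexFace I with hKdef
    have hconv : Convex ℝ K :=
      convex_finsetSum S _ fun I _ => (convex_convexHull ℝ _).smul (y I)
    have hcomp : IsCompact K :=
      isCompact_finsetSum S _ fun I _ => (isCompact_simplexFace I).smul (y I)
    obtain ⟨f, u, hfu, hut⟩ :=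
      geometric_hahn_banach_closed_point hconv hcomp.isClosed hns
    set w : Fin n → ℝ := fun i => f (Pi.single i 1) with hwdef
    have hft : f t = ∑ i, t i * w i := linfunc_eq f t
    -- the maximizing point p
    have hchoice : ∀ J : {J // J ∈ S}, ∃ i ∈ J.1, J.1.sup' (Finset.mem_filter.mp J.2).2 w = w i :=
      fun J => Finset.exists_mem_eq_sup' _ w
    choose c hcmem hcval using hchoice
    set p : Fin n → ℝ := ∑ J ∈ S.attach, y J.1 • (Pi.single (c J) (1 : ℝ) : Fin n → ℝ) with hpdef
    have hpK : p ∈ K := by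
      rw [hKdef, ← Finset.sum_attach S (fun J => y J • simplexFace J)]
      exact Set.finset_sum_mem_finset_sum _ _ _
        (fun J _ => Set.smul_mem_smul_set (single_mem_simplexFace (hcmem J)))
    have hfp : f p = ∑ J ∈ (Finset.univ : Finset (Fin n)).powerset, y J * maxW w J := by
      have e1 : f p = ∑ J ∈ S.attach, y J.1 * w (c J) := by
        rw [hpdef, map_sum]
        apply Finset.sum_congr rfl
        intro J _
        rw [map_smul]
        rfl
      have e2 : ∀ J : {J // J ∈ S}, y J.1 * w (c J) = y J.1 * maxW w J.1 := by
        intro J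
        congr 1
        rw [maxW, dif_pos (Finset.mem_filter.mp J.2).2]
        exact (hcval J).symm
      rw [e1, Finset.sum_congr rfl fun J _ => e2 J,
        Finset.sum_attach S (fun J => y J * maxW w J)]
      rw [hSdef]
      apply Finset.sum_filter_of_ne
      intro J _ hJ
      rcases Finset.eq_empty_or_nonempty J with rfl | h
      · exact absurd (by simp [hy0]) hJ
      · exact h
    have hkey : ∑ i, t i * w i
        ≤ ∑ J ∈ (Finset.univ : Finset (Fin n)).powerset, y J * maxW w J :=
      key_ineq y hy hy0 t ht.1 ht.2 w
    have hpu := hfu p hpK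
    rw [hfp] at hpu
    rw [hft] at hut
    linarith
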